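/- Let q be a prime power with gcd(q, 3) = 1. Then EGZ_q^{(3)}(ℤ_q) ≥ 2q − 3, i.e., there exists a sequence over ℤ/qℤ of length 2q − 4 containing no subsequence of length q on which the third elementary symmetric polynomial vanishes mod q. -/

import Mathlib

open Finset

/-- The `m`-th elementary symmetric expression of the subsequence of `g` selected
by the index set `J`. -/
def eSym {n : ℕ} {R : Type*} [CommRing R] (m : ℕ) (g : Fin n → R) (J : Finset (Fin n)) : R :=
  ∑ T ∈ J.powersetCard m, ∏ i ∈ T, g i

lemma key (p k ℓ : ℕ) (hp : p.Prime) (hp3 : p ≠ 3) (h3 : 3 ≤ ℓ) (hℓ : ℓ < p ^ k) :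
    ¬ p ^ k ∣ ℓ.choose 3 := by
  intro hdvd
  obtain ⟨m, rfl⟩ : ∃ m, ℓ = m + 3 := ⟨ℓ - 3, by omega⟩
  have hC : (m + 3).choose 3 ≠ 0 := Nat.choose_pos (by omega) |>.ne'
  have hN : 6 * (m + 3).choose 3 = (m + 1) * (m + 2) * (m + 3) := by
    have h1 : (m + 3).descFactorial 3 = 6 * (m + 3).choose 3 := by
      rw [Nat.descFactorial_eq_factorial_mul_choose]; norm_num [Nat.factorial]
    have h2 : (m + 3).descFactorial 3 = (m + 1) * ((m + 2) * ((m + 3) * 1)) := by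
      simp [Nat.descFactorial_succ]
    rw [← h1, h2]; ring
  have hk : k ≤ ((m + 3).choose 3).factorization p :=
    (Nat.Prime.pow_dvd_iff_le_factorization hp hC).mp hdvd
  set a1 := (m + 1).factorization p with ha1
  set a2 := (m + 2).factorization p with ha2
  set a3 := (m + 3).factorization p with ha3
  have hmul : ((m + 1) * (m + 2) * (m + 3)).factorization p = a1 + a2 + a3 := by
    rw [Nat.factorization_mul (by positivity) (by omega),
      Nat.factorization_mul (by omega) (by omega)]
    simp
    rfl
  have hmul2 : (6 * (m + 3).choose 3).factorization p
      = (6 : ℕ).factorization p + ((m + 3).choose 3).factorization p := by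
    rw [Nat.factorization_mul (by norm_num) hC]; simp
  have h6f : (6 : ℕ).factorization p = if p = 2 then 1 else 0 := by
    have : (6 : ℕ) = 2 * 3 := rfl
    rw [this, Nat.factorization_mul (by norm_num) (by norm_num),
      Nat.Prime.factorization Nat.prime_two, Nat.Prime.factorization Nat.prime_three]
    simp [Finsupp.single_apply, Ne.symm hp3, eq_comm]
  have bound : ∀ x : ℕ, 0 < x → x < p ^ k → x.factorization p < k := by
    intro x hx hxk
    by_contra h
    push_neg at h
    have : p ^ k ∣ x := (Nat.Prime.pow_dvd_iff_le_factorization hp hx.ne').mpr h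
    exact absurd (Nat.le_of_dvd hx this) (by omega)
  have hb1 : a1 < k := bound _ (by omega) (by omega)
  have hb2 : a2 < k := bound _ (by omega) (by omega)
  have hb3 : a3 < k := bound _ (by omega) (by omega)
  have hd : ∀ x : ℕ, 0 < x → (1 ≤ x.factorization p ↔ p ∣ x) := by
    intro x hx
    rw [← hp.pow_dvd_iff_le_factorization hx.ne', pow_one]
  have h12 : a1 = 0 ∨ a2 = 0 := by
    by_contra h
    push_neg at h
    have d1 : p ∣ m + 1 := (hd _ (by omega)).mp (by omega)
    have d2 : p ∣ m + 2 := (hd _ (by omega)).mp (by omega)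
    have : p ∣ 1 := by
      have := Nat.dvd_sub d2 d1
      simpa using this
    have := Nat.le_of_dvd one_pos this
    have := hp.two_le
    omega
  have h23 : a2 = 0 ∨ a3 = 0 := by
    by_contra h
    push_neg at h
    have d2 : p ∣ m + 2 := (hd _ (by omega)).mp (by omega)
    have d3 : p ∣ m + 3 := (hd _ (by omega)).mp (by omega)
    have : p ∣ 1 := by
      have := Nat.dvd_sub d3 d2
      simpa using this
    have := Nat.le_of_dvd one_pos this
    have := hp.two_le
    omega
  have htot : a1 + a2 + a3 = (6 : ℕ).factorization p + ((m + 3).choose 3).factorization p := by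
    rw [← hmul, ← hN, hmul2]
  rcases eq_or_ne p 2 with rfl | hp2
  · have h13 : a1 ≤ 1 ∨ a3 ≤ 1 := by
      by_contra h
      push_neg at h
      have d1 : 2 ^ 2 ∣ m + 1 :=
        (Nat.Prime.pow_dvd_iff_le_factorization hp (by omega)).mpr (by omega)
      have d3 : 2 ^ 2 ∣ m + 3 :=
        (Nat.Prime.pow_dvd_iff_le_factorization hp (by omega)).mpr (by omega)
      have : (2 : ℕ) ^ 2 ∣ 2 := by
        have := Nat.dvd_sub d3 d1
        simpa using this
      have := Nat.le_of_dvd (by norm_num) this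
      norm_num at this
    rw [h6f] at htot
    simp at htot
    omega
  · have h13 : a1 = 0 ∨ a3 = 0 := by
      by_contra h
      push_neg at h
      have d1 : p ∣ m + 1 := (hd _ (by omega)).mp (by omega)
      have d3 : p ∣ m + 3 := (hd _ (by omega)).mp (by omega)
      have : p ∣ 2 := by
        have := Nat.dvd_sub d3 d1
        simpa using this
      have := Nat.le_of_dvd (by norm_num) this
      have := hp.two_le
      exact hp2 (by omega)
    rw [h6f, if_neg hp2] at htot
    simp at htot
    omega

theorem stmt_17 (q : ℕ) (hq : IsPrimePow q) (hq3 : Nat.gcd q 3 = 1) :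
    ∃ g : Fin (2 * q - 4) → ZMod q,
      ∀ J : Finset (Fin (2 * q - 4)), J.card = q → eSym 3 g J ≠ 0 := by
  obtain ⟨p, k, hpp, hk, hq'⟩ := hq
  have hp : p.Prime := hpp.nat_prime
  have hq2 : 2 ≤ q := by
    rw [← hq']
    calc 2 ≤ p := hp.two_le
    _ = p ^ 1 := (pow_one p).symm
    _ ≤ p ^ k := Nat.pow_le_pow_right hp.one_lt.le hk
  have hp3 : p ≠ 3 := by
    rintro rfl
    have h3q : 3 ∣ q := hq' ▸ dvd_pow_self 3 hk.ne'
    have : (3 : ℕ) ∣ Nat.gcd q 3 := Nat.dvd_gcd h3q dvd_rfl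
    rw [hq3] at this
    omega
  have hqne3 : q ≠ 3 := by
    rintro rfl
    simp [Nat.gcd_comm] at hq3
  by_cases hq4 : q < 4
  · -- q = 2 : vacuous, Fin 0
    refine ⟨fun _ => 1, fun J hJ => absurd hJ ?_⟩
    have hcard := Finset.card_le_univ J
    rw [Fintype.card_fin] at hcard
    omega
  push_neg at hq4
  set n := 2 * q - 4 with hn
  refine ⟨fun i => if (i : ℕ) < q - 3 then 0 else 1, fun J hJ => ?_⟩
  set A := J.filter (fun i : Fin n => ¬ ((i : ℕ) < q - 3)) with hA
  have hAJ : A ⊆ J := filter_subset _ _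
  -- card bounds for A
  have hlt : q - 3 < n := by omega
  have hBeq : univ.filter (fun i : Fin n => ¬ ((i : ℕ) < q - 3))
      = Finset.Ici (⟨q - 3, hlt⟩ : Fin n) := by
    ext i
    simp [Fin.le_def, not_lt]
  have hBcard : (univ.filter (fun i : Fin n => ¬ ((i : ℕ) < q - 3))).card = q - 1 := by
    rw [hBeq, Fin.card_Ici]
    simp [hn]
    omega
  have hAub : A.card ≤ q - 1 :=
    le_trans (card_le_card (filter_subset_filter _ (subset_univ J))) (le_of_eq hBcard)
  have hsplit : (J.filter (fun i : Fin n => ((i : ℕ) < q - 3))).card + A.card = J.card := by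
    rw [hA]
    exact Finset.card_filter_add_card_filter_not _
  have hCcard : (univ.filter (fun i : Fin n => ((i : ℕ) < q - 3))).card = q - 3 := by
    have : univ.filter (fun i : Fin n => ((i : ℕ) < q - 3))
        = Finset.Iio (⟨q - 3, hlt⟩ : Fin n) := by
      ext i; simp [Fin.lt_def]
    rw [this, Fin.card_Iio]
  have hlb : (J.filter (fun i : Fin n => ((i : ℕ) < q - 3))).card ≤ q - 3 :=
    le_trans (card_le_card (filter_subset_filter _ (subset_univ J))) (le_of_eq hCcard)
  have hAlb : 3 ≤ A.card := by omega
  -- compute eSym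
  have hprod : ∀ T ∈ J.powersetCard 3,
      (∏ i ∈ T, (if ((i : ℕ) < q - 3) then (0 : ZMod q) else 1))
        = if T ∈ A.powersetCard 3 then 1 else 0 := by
    intro T hT
    rw [mem_powersetCard] at hT
    by_cases h : ∀ i ∈ T, ¬ ((i : ℕ) < q - 3)
    · rw [if_pos, Finset.prod_eq_one]
      · intro i hi
        rw [if_neg (h i hi)]
      · rw [mem_powersetCard]
        refine ⟨fun i hi => ?_, hT.2⟩
        rw [hA, mem_filter]
        exact ⟨hT.1 hi, h i hi⟩
    · push_neg at h
      obtain ⟨i, hi, hiq⟩ := h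
      have h0 : (∏ i ∈ T, (if ((i : ℕ) < q - 3) then (0 : ZMod q) else 1)) = 0 :=
        Finset.prod_eq_zero hi (if_pos hiq)
      rw [h0, eq_comm, if_neg]
      rw [mem_powersetCard]
      rintro ⟨hsub, -⟩
      have := hsub hi
      rw [hA, mem_filter] at this
      exact this.2 hiq
  have hAP : A.powersetCard 3 ⊆ J.powersetCard 3 := powersetCard_mono hAJ
  have heSym : eSym 3 (fun i : Fin n => if ((i : ℕ) < q - 3) then (0 : ZMod q) else 1) J
      = (A.card.choose 3 : ZMod q) := by
    rw [eSym, Finset.sum_congr rfl hprod, Finset.sum_ite_mem,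
      Finset.inter_eq_right.mpr hAP, Finset.sum_const, Finset.card_powersetCard]
    simp
  rw [heSym]
  haveI : NeZero q := ⟨by omega⟩
  rw [Ne, ZMod.natCast_eq_zero_iff]
  rw [← hq']
  exact key p k A.card hp hp3 hAlb (by omega)
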